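/- Let E be a ring and d ∈ H(E) square-zero in the Hurwitz series ring over E. If there exists an invertible φ ∈ H(E) and a constant sequence c = (c₀, 0, 0, ...) with φ * d * φ^{-1} = c, then j(d) = d*f - f*d for f = φ^{-1} * j(φ); i.e., the shift j(d) is a commutator with d. -/

import Mathlib

/-- Hurwitz (binomial) convolution of sequences. -/
def hmul {E : Type*} [Ring E] (f g : ℕ → E) : ℕ → E :=
  fun n => ∑ i ∈ Finset.range (n + 1), (n.choose i) • (f i * g (n - i))

/-- The identity of the Hurwitz series ring. -/
def hone {E : Type*} [Ring E] : ℕ → E := fun n => if n = 0 then 1 else 0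

/-- The shift operator. -/
def jop {E : Type*} (f : ℕ → E) : ℕ → E := fun n => f (n + 1)

section aux
variable {E : Type*} [Ring E]

lemma hmul_add (f g h : ℕ → E) : hmul f (g + h) = hmul f g + hmul f h := by
  funext n
  simp [hmul, mul_add, smul_add, Finset.sum_add_distrib]

lemma add_hmul (f g h : ℕ → E) : hmul (f + g) h = hmul f h + hmul g h := by
  funext n
  simp [hmul, add_mul, smul_add, Finset.sum_add_distrib]

lemma hmul_neg (f g : ℕ → E) : hmul f (-g) = -(hmul f g) := by
  funext n
  simp [hmul, Finset.sum_neg_distrib]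

lemma hmul_hone (f : ℕ → E) : hmul f hone = f := by
  funext n
  rw [hmul]
  rw [Finset.sum_eq_single_of_mem n (by simp)]
  · simp [hone]
  · intro i hi hne
    have : n - i ≠ 0 := by
      simp only [Finset.mem_range] at hi; omega
    simp [hone, this]

lemma hone_hmul (f : ℕ → E) : hmul hone f = f := by
  funext n
  rw [hmul]
  rw [Finset.sum_eq_single_of_mem 0 (by simp)]
  · simp [hone]
  · intro i hi hne
    simp [hone, hne]

lemma hmul_assoc (f g h : ℕ → E) : hmul (hmul f g) h = hmul f (hmul g h) := by
  funext n
  simp only [hmul, Finset.sum_mul, Finset.mul_sum, Finset.smul_sum, smul_mul_assoc,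
    mul_smul_comm, smul_smul]
  rw [Finset.sum_sigma', Finset.sum_sigma']
  refine Finset.sum_nbij' (fun p => ⟨p.2, p.1 - p.2⟩) (fun p => ⟨p.1 + p.2, p.1⟩)
    ?_ ?_ ?_ ?_ ?_
  · rintro ⟨m, i⟩ hp
    simp only [Finset.mem_sigma, Finset.mem_range] at hp ⊢
    omega
  · rintro ⟨i, j⟩ hp
    simp only [Finset.mem_sigma, Finset.mem_range] at hp ⊢
    omega
  · rintro ⟨m, i⟩ hp
    simp only [Finset.mem_sigma, Finset.mem_range] at hp
    have h' : i + (m - i) = m := by omega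
    simp [h']
  · rintro ⟨i, j⟩ hp
    simp only [Finset.mem_sigma, Finset.mem_range] at hp
    have h' : i + j - i = j := by omega
    simp [h']
  · rintro ⟨m, i⟩ hp
    simp only [Finset.mem_sigma, Finset.mem_range] at hp
    have h1 : i ≤ m := by omega
    have h2 : m ≤ n := by omega
    have hc : n.choose m * m.choose i = n.choose i * (n - i).choose (m - i) :=
      Nat.choose_mul h1
    have e1 : n - i - (m - i) = n - m := by omega
    rw [hc, e1, mul_assoc]

lemma sum_shift {M : Type*} [AddCommMonoid M] (G : ℕ → M) (n : ℕ) (h : G (n + 1) = 0) :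
    (∑ i ∈ Finset.range (n + 1), G (i + 1)) + G 0 = ∑ i ∈ Finset.range (n + 1), G i := by
  rw [← Finset.sum_range_succ' G (n + 1), Finset.sum_range_succ, h, add_zero]

lemma jop_hmul (f g : ℕ → E) :
    jop (hmul f g) = hmul (jop f) g + hmul f (jop g) := by
  funext n
  simp only [jop, hmul, Pi.add_apply]
  have key : ∀ i ∈ Finset.range (n + 1), (n.choose i) • (f i * g (n - i + 1))
      = (n.choose i) • (f i * g (n + 1 - i)) := by
    intro i hi
    simp only [Finset.mem_range] at hi
    have : n - i + 1 = n + 1 - i := by omega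
    rw [this]
  rw [Finset.sum_congr rfl key]
  rw [Finset.sum_range_succ' (fun i => ((n + 1).choose i) • (f i * g (n + 1 - i))) (n + 1)]
  simp only [Nat.choose_succ_succ, add_smul, Finset.sum_add_distrib, Nat.succ_sub_succ]
  have e4 : (∑ i ∈ Finset.range (n + 1),
        (n.choose (i + 1)) • (f (i + 1) * g (n + 1 - (i + 1))))
      + (n.choose 0) • (f 0 * g (n + 1 - 0))
      = ∑ i ∈ Finset.range (n + 1), (n.choose i) • (f i * g (n + 1 - i)) :=
    sum_shift (fun j => (n.choose j) • (f j * g (n + 1 - j))) n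
      (by simp [Nat.choose_succ_self])
  have e5 : ∀ i ∈ Finset.range (n + 1), (n.choose (i + 1)) • (f (i + 1) * g (n - i))
      = (n.choose (i + 1)) • (f (i + 1) * g (n + 1 - (i + 1))) := by
    intro i hi
    have : n + 1 - (i + 1) = n - i := by omega
    rw [this]
  have e6 : ((n + 1).choose 0) • (f 0 * g (n + 1 - 0))
      = (n.choose 0) • (f 0 * g (n + 1 - 0)) := by
    norm_num
  rw [Finset.sum_congr rfl e5, e6, add_assoc, e4]
lemma jop_hone : jop (hone : ℕ → E) = 0 := by
  funext n; simp [jop, hone]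

end aux

/-- If a square-zero `d` is conjugated by an invertible `φ` to a constant sequence,
then `j(d)` is the commutator `d*f - f*d` with `f = φ⁻¹ * j(φ)`. -/
theorem jop_is_commutator_of_conjugate_constant {E : Type*} [Ring E]
    (d φ ψ : ℕ → E) (c₀ : E)
    (hd : hmul d d = 0)
    (h1 : hmul φ ψ = hone) (h2 : hmul ψ φ = hone)
    (hc : hmul (hmul φ d) ψ = fun n => if n = 0 then c₀ else 0) :
    jop d = hmul d (hmul ψ (jop φ)) - hmul (hmul ψ (jop φ)) d := by
  set f := hmul ψ (jop φ) with hf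
  -- jop of the constant sequence is zero
  have hjc : jop (hmul (hmul φ d) ψ) = 0 := by
    rw [hc]; funext n; simp [jop]
  -- expand via Leibniz
  have hexp : hmul (hmul (jop φ) d) ψ + hmul (hmul φ (jop d)) ψ
      + hmul (hmul φ d) (jop ψ) = 0 := by
    rw [← hjc, jop_hmul, jop_hmul, add_hmul]
  -- jop ψ * φ = -f
  have hinv : hmul (jop ψ) φ = -f := by
    have h0 : hmul (jop ψ) φ + hmul ψ (jop φ) = 0 := by
      rw [← jop_hmul, h2, jop_hone]
    exact eq_neg_of_add_eq_zero_left h0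
  -- multiply hexp on the left by ψ and on the right by φ
  have key : hmul ψ (hmul (hmul (hmul (jop φ) d) ψ + hmul (hmul φ (jop d)) ψ
      + hmul (hmul φ d) (jop ψ)) φ) = 0 := by
    rw [hexp]
    funext n
    simp [hmul]
  rw [add_hmul, add_hmul, hmul_add, hmul_add] at key
  -- simplify each of the three terms
  have t1 : hmul ψ (hmul (hmul (hmul (jop φ) d) ψ) φ) = hmul f d := by
    rw [hmul_assoc (hmul (jop φ) d) ψ φ, h2, hmul_hone, hf,
      ← hmul_assoc ψ (jop φ) d]
  have t2 : hmul ψ (hmul (hmul (hmul φ (jop d)) ψ) φ) = jop d := by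
    rw [hmul_assoc (hmul φ (jop d)) ψ φ, h2, hmul_hone,
      ← hmul_assoc ψ φ (jop d), h2, hone_hmul]
  have t3 : hmul ψ (hmul (hmul (hmul φ d) (jop ψ)) φ) = -(hmul d f) := by
    rw [hmul_assoc (hmul φ d) (jop ψ) φ, hinv, hmul_neg, hmul_neg,
      hmul_assoc φ d f, ← hmul_assoc ψ φ (hmul d f), h2, hone_hmul]
  rw [t1, t2, t3] at key
  have k2 : hmul f d + jop d = hmul d f := by
    have := eq_neg_of_add_eq_zero_left key
    rwa [neg_neg] at this
  rw [eq_sub_iff_add_eq, add_comm]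
  exact k2
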